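/- Let G be a graph of order n ≥ 3 with δ(G) ≥ (n−1)/2. Then G is hamiltonian unless n is odd and either G = H ∨ ((n+1)/2)·K₁ for some graph H of order (n−1)/2, or G = K₁ ∨ 2K_{(n−1)/2}. -/

import Mathlib

open scoped Classical

/-- An `(s,t)`-bipartite-hole: disjoint vertex sets of sizes `s` and `t` with no edge between. -/
def HasBipHole {V : Type*} (G : SimpleGraph V) (s t : ℕ) : Prop :=
  ∃ S T : Finset V, Disjoint S T ∧ S.card = s ∧ T.card = t ∧
    ∀ a ∈ S, ∀ b ∈ T, ¬ G.Adj a b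

/-- The bipartite-hole-number: least `k` admitting positive `s,t` with `s+t = k+1` and
no `(s,t)`-bipartite-hole. -/
noncomputable def bhn {V : Type*} (G : SimpleGraph V) : ℕ :=
  sInf {k | ∃ s t : ℕ, 0 < s ∧ 0 < t ∧ s + t = k + 1 ∧ ¬ HasBipHole G s t}

/-- The join `G ∨ K₁`: one new vertex adjacent to everything. -/
def joinK1 {V : Type*} (G : SimpleGraph V) : SimpleGraph (Option V) where
  Adj a b := match a, b with
    | some a, some b => G.Adj a b
    | some _, none => True
    | none, some _ => True
    | none, none => False
  symm := ⟨by
    rintro (_ | a) (_ | b) h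
    · exact h.elim
    · trivial
    · trivial
    · exact h.symm⟩
  loopless := ⟨by
    rintro (_ | a) h
    · exact h
    · exact G.irrefl h⟩

/-- Minimum degree sum over non-adjacent pairs of distinct vertices. -/
noncomputable def sigma2 {V : Type*} [Fintype V] (G : SimpleGraph V) : ℕ :=
  sInf {m | ∃ x y : V, x ≠ y ∧ ¬ G.Adj x y ∧ G.degree x + G.degree y = m}

/-- A graph is traceable if it has a Hamilton path. -/
def IsTraceable {V : Type*} (G : SimpleGraph V) : Prop :=
  ∃ (a b : V) (p : G.Walk a b), p.IsHamiltonian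

/-- `G` is 2-connected: at least 3 vertices and deleting any vertex leaves it connected. -/
def TwoConnected {V : Type*} [Fintype V] (G : SimpleGraph V) : Prop :=
  3 ≤ Fintype.card V ∧ ∀ v : V, (SimpleGraph.induce ({v}ᶜ : Set V) G).Connected

open List SimpleGraph

namespace HamAux

variable {V : Type*}

lemma exists_walk_of_chain (G : SimpleGraph V) :
    ∀ (l : List V) (a b : V), List.IsChain G.Adj (a :: l) →
      (a :: l).getLast (List.cons_ne_nil a l) = b →
    ∃ p : G.Walk a b, p.support = a :: l := by
  intro l
  induction l with
  | nil =>
    intro a b _ hb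
    simp only [List.getLast_singleton] at hb
    subst hb; exact ⟨SimpleGraph.Walk.nil, rfl⟩
  | cons c t ih =>
    intro a b hch hb
    rw [List.chain_cons] at hch
    have hlast : (c :: t).getLast (List.cons_ne_nil c t) = b := by
      rw [← hb, List.getLast_cons (List.cons_ne_nil c t)]
    obtain ⟨p, hp⟩ := ih c b hch.2 hlast
    exact ⟨SimpleGraph.Walk.cons hch.1 p, by simp [hp]⟩

lemma edge_not_mem (G : SimpleGraph V) {a b : V} (p : G.Walk a b) (hp : p.IsPath)
    (hlen : 2 ≤ p.length) : s(b, a) ∉ p.edges := by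
  cases p with
  | nil => simp at hlen
  | cons h q =>
    rename_i c
    rw [SimpleGraph.Walk.cons_isPath_iff] at hp
    intro hmem
    rw [SimpleGraph.Walk.edges_cons, List.mem_cons] at hmem
    rcases hmem with hmem | hmem
    · rw [Sym2.eq_iff] at hmem
      rcases hmem with ⟨rfl, rfl⟩ | ⟨h1, h2⟩
      · exact G.irrefl h
      · subst h1
        -- q : G.Walk b b, a path, hence nil
        have := SimpleGraph.Walk.isPath_iff_eq_nil (p := q) |>.mp hp.1
        subst this
        simp at hlen
    · exact hp.2 (SimpleGraph.Walk.snd_mem_support_of_mem_edges q hmem)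

lemma isHamiltonian_of_cycle_list (G : SimpleGraph V) [Fintype V] (hn : 3 ≤ Fintype.card V)
    (l : List V) (hne : l ≠ []) (hnd : l.Nodup) (hall : ∀ x, x ∈ l) (hch : l.IsChain G.Adj)
    (hcl : G.Adj (l.getLast hne) (l.head hne)) : G.IsHamiltonian := by
  have hlen : l.length = Fintype.card V := by
    rw [← List.toFinset_card_of_nodup hnd]
    congr 1
    apply Finset.eq_univ_iff_forall.mpr
    intro x; simpa using hall x
  cases l with
  | nil => simp at hne
  | cons a t =>
    have hch' : List.IsChain G.Adj (a :: t) := hch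
    obtain ⟨p, hp⟩ := exists_walk_of_chain G t a (((a :: t).getLast hne)) hch' rfl
    have hpath : p.IsPath := by rw [SimpleGraph.Walk.isPath_def, hp]; exact hnd
    have hplen : 2 ≤ p.length := by
      have := congrArg List.length hp
      rw [SimpleGraph.Walk.length_support] at this
      simp only [List.length_cons] at this
      have ht : t.length + 1 = Fintype.card V := by simpa using hlen
      omega
    have hcyc : (SimpleGraph.Walk.cons hcl p).IsHamiltonianCycle := by
      rw [SimpleGraph.Walk.isHamiltonianCycle_iff_isCycle_and_support_count_tail_eq_one]
      constructor
      · exact (SimpleGraph.Walk.cons_isCycle_iff p hcl).mpr ⟨hpath, edge_not_mem G p hpath hplen⟩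
      · intro x
        rw [show (SimpleGraph.Walk.cons hcl p).support.tail = p.support from rfl, hp]
        exact List.count_eq_one_of_mem hnd (hall x)
    exact fun _ => ⟨_, _, hcyc⟩



lemma chain'_range' {R : ℕ → ℕ → Prop} (s k : ℕ)
    (h : ∀ m, s ≤ m → m + 1 < s + k → R m (m + 1)) :
    List.IsChain R (List.range' s k) := by
  induction k generalizing s with
  | zero => simp
  | succ k ih =>
    rw [List.range'_succ, List.isChain_cons]
    constructor
    · intro y hy
      cases k with
      | zero => simp at hy
      | succ k =>
        rw [List.range'_succ] at hy
        simp only [List.head?_cons, Option.mem_def, Option.some.injEq] at hy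
        subst hy
        exact h s le_rfl (by omega)
    · exact ih (s + 1) (fun m hm hm2 => h m (by omega) (by omega))

/-- Build a cycle vertex-list from an index list. -/
lemma cycle_list_of_idx (G : SimpleGraph V) (v : ℕ → V) (k : ℕ)
    (hinj : ∀ i < k, ∀ j < k, v i = v j → i = j)
    (l : List ℕ) (hmem : ∀ m ∈ l, m < k) (hnd : l.Nodup) (hcov : ∀ m, m < k → m ∈ l)
    (hch : l.IsChain (fun a b => G.Adj (v a) (v b)))
    (hne : l ≠ []) (hcl : G.Adj (v (l.getLast hne)) (v (l.head hne))) :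
    ∃ C : List V, ∃ hCne : C ≠ [], C.Nodup ∧ C.IsChain G.Adj ∧
      G.Adj (C.getLast hCne) (C.head hCne) ∧ (∀ x, x ∈ C ↔ ∃ i < k, v i = x) ∧
      C.length = l.length := by
  refine ⟨l.map v, by simpa using hne, ?_, ?_, ?_, ?_, by simp⟩
  · exact List.Nodup.map_on (fun x hx y hy => hinj x (hmem x hx) y (hmem y hy)) hnd
  · rw [List.isChain_map]; exact hch
  · rw [List.getLast_map, List.head_map]; exact hcl
  · intro x
    simp only [List.mem_map]
    constructor
    · rintro ⟨i, hi, rfl⟩; exact ⟨i, hmem i hi, rfl⟩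
    · rintro ⟨i, hi, rfl⟩; exact ⟨i, hcov i hi, rfl⟩

lemma isHamiltonian_of_idx (G : SimpleGraph V) [Fintype V] (hn3 : 3 ≤ Fintype.card V)
    (v : ℕ → V) (n : ℕ) (hcard : n = Fintype.card V)
    (hinj : ∀ i < n, ∀ j < n, v i = v j → i = j) (hsurj : ∀ x, ∃ i < n, v i = x)
    (l : List ℕ) (hmem : ∀ m ∈ l, m < n) (hnd : l.Nodup) (hcov : ∀ m, m < n → m ∈ l)
    (hch : l.IsChain (fun a b => G.Adj (v a) (v b)))
    (hne : l ≠ []) (hcl : G.Adj (v (l.getLast hne)) (v (l.head hne))) :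
    G.IsHamiltonian := by
  obtain ⟨C, hCne, h1, h2, h3, h4, _⟩ :=
    cycle_list_of_idx G v n hinj l hmem hnd hcov hch hne hcl
  exact isHamiltonian_of_cycle_list G hn3 C hCne h1
    (fun x => (h4 x).mpr (hsurj x)) h2 h3


lemma extend_cycle (G : SimpleGraph V) (C : List V) (hnd : C.Nodup)
    (hch : C.IsChain G.Adj) (hne : C ≠ [])
    (hcl : G.Adj (C.getLast hne) (C.head hne)) (x y : V) (hy : y ∈ C) (hx : x ∉ C)
    (hadj : G.Adj x y) :
    ∃ P : List V, P.Nodup ∧ P.IsChain G.Adj ∧ P.length = C.length + 1 := by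
  obtain ⟨C₁, C₂, rfl⟩ := List.append_of_mem hy
  refine ⟨x :: ((y :: C₂) ++ C₁), ?_, ?_, by simp; omega⟩
  · have hperm : ((y :: C₂) ++ C₁).Perm (C₁ ++ (y :: C₂)) := List.perm_append_comm
    rw [List.nodup_cons]
    exact ⟨fun hc => hx (hperm.subset hc), hperm.nodup_iff.mpr hnd⟩
  · rw [List.isChain_cons]
    constructor
    · intro z hz
      rw [List.cons_append, List.head?_cons, Option.mem_def, Option.some.injEq] at hz
      subst hz; exact hadj
    · rw [List.isChain_append]
      rw [List.isChain_append] at hch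
      refine ⟨hch.2.1, hch.1, ?_⟩
      intro a ha b hb
      cases C₁ with
      | nil => simp at hb
      | cons c C₁' =>
        rw [Option.mem_def, List.getLast?_eq_getLast (l := (y :: C₂)) (by simp),
          Option.some.injEq] at ha
        rw [Option.mem_def, List.head?_cons, Option.some.injEq] at hb
        subst ha; subst hb
        have hg : ((c :: C₁') ++ y :: C₂).getLast (by simp) = (y :: C₂).getLast (by simp) := by
          have h2 := List.getLast?_eq_getLast (l := ((c :: C₁') ++ y :: C₂)) (by simp)
          rw [List.getLast?_append, List.getLast?_eq_getLast (l := (y :: C₂)) (by simp)] at h2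
          simp only [Option.some_or, Option.some.injEq] at h2
          exact h2.symm
        have hh : ((c :: C₁') ++ y :: C₂).head (by simp) = c := by simp
        rw [← hg, ← hh]
        exact hcl



lemma cross_edge_of_walk (G : SimpleGraph V) (S : Set V) :
    ∀ {a b : V} (_ : G.Walk a b), a ∈ S → b ∉ S → ∃ u v, u ∈ S ∧ v ∉ S ∧ G.Adj u v := by
  intro a b w
  induction w with
  | nil => intro h1 h2; exact absurd h1 h2
  | @cons u c b h p ih =>
    intro h1 h2
    by_cases hc : c ∈ S
    · exact ih hc h2
    · exact ⟨u, c, h1, hc, h⟩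

lemma connected_of_deg (G : SimpleGraph V) [Fintype V] [DecidableRel G.Adj]
    (hV : Nonempty V) (h : Fintype.card V ≤ 2 * G.minDegree + 1) : G.Connected := by
  rw [SimpleGraph.connected_iff]
  refine ⟨fun u w => ?_, hV⟩
  by_contra hr
  classical
  set Su := Finset.univ.filter (fun x => G.Reachable u x) with hSu
  set Sw := Finset.univ.filter (fun x => G.Reachable w x) with hSw
  have hdisj : Disjoint Su Sw := by
    rw [Finset.disjoint_left]
    intro x hx hx2
    rw [hSu, Finset.mem_filter] at hx
    rw [hSw, Finset.mem_filter] at hx2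
    exact hr (hx.2.trans hx2.2.symm)
  have hsub : ∀ (z : V), insert z (G.neighborFinset z) ⊆
      Finset.univ.filter (fun x => G.Reachable z x) := by
    intro z x hx
    rw [Finset.mem_insert, SimpleGraph.mem_neighborFinset] at hx
    rw [Finset.mem_filter]
    refine ⟨Finset.mem_univ x, ?_⟩
    rcases hx with rfl | hx
    · exact SimpleGraph.Reachable.refl x
    · exact hx.reachable
  have hcard : ∀ (z : V), G.minDegree + 1 ≤
      (Finset.univ.filter (fun x => G.Reachable z x)).card := by
    intro z
    calc G.minDegree + 1 ≤ G.degree z + 1 := by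
          have := G.minDegree_le_degree z; omega
      _ = (insert z (G.neighborFinset z)).card := by
          rw [Finset.card_insert_of_notMem (by simp), G.card_neighborFinset_eq_degree]
      _ ≤ _ := Finset.card_le_card (hsub z)
  have := Finset.card_union_of_disjoint hdisj
  have hle : Su.card + Sw.card ≤ Fintype.card V := by
    rw [← this, ← Finset.card_univ]
    exact Finset.card_le_card (Finset.subset_univ _)
  have h1 := hcard u
  have h2 := hcard w
  rw [← hSu] at h1
  rw [← hSw] at h2
  omega

lemma exists_max_path (G : SimpleGraph V) [Fintype V] (hV : Nonempty V) :
    ∃ L : List V, L ≠ [] ∧ L.Nodup ∧ L.IsChain G.Adj ∧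
      ∀ M : List V, M.Nodup → M.IsChain G.Adj → M.length ≤ L.length := by
  classical
  set n := Fintype.card V with hn
  set P : ℕ → Prop := fun k => ∃ L : List V, L.Nodup ∧ L.IsChain G.Adj ∧ L.length = k with hP
  have hn1 : 1 ≤ n := Fintype.card_pos
  have hP1 : P 1 := ⟨[Classical.arbitrary V], by simp⟩
  have hbound : ∀ M : List V, M.Nodup → M.length ≤ n := by
    intro M hM
    rw [← List.toFinset_card_of_nodup hM, hn, ← Finset.card_univ]
    exact Finset.card_le_card (Finset.subset_univ _)
  have hm1 : 1 ≤ Nat.findGreatest P n := Nat.le_findGreatest hn1 hP1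
  obtain ⟨L, hnd, hch, hlen⟩ : P (Nat.findGreatest P n) :=
    Nat.findGreatest_spec hn1 hP1
  refine ⟨L, ?_, hnd, hch, ?_⟩
  · intro hLnil; rw [hLnil] at hlen; simp at hlen; omega
  · intro M hMnd hMch
    rw [hlen]
    exact Nat.le_findGreatest (hbound M hMnd) ⟨M, hMnd, hMch, rfl⟩


lemma head?_range' {s k : ℕ} (h : 0 < k) : (List.range' s k).head? = some s := by
  cases k with
  | zero => omega
  | succ k => rw [List.range'_succ]; rfl

lemma getLast?_range'_pos {s k : ℕ} (h : 0 < k) :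
    (List.range' s k).getLast? = some (s + k - 1) := by
  rw [List.getLast?_range', if_neg (by omega)]

lemma head_of_head? {α : Type*} {l : List α} {a : α} (h : l.head? = some a) (hne : l ≠ []) :
    l.head hne = a := by
  rw [List.head?_eq_head hne] at h; exact Option.some.inj h

lemma getLast_of_getLast? {α : Type*} {l : List α} {a : α} (h : l.getLast? = some a)
    (hne : l ≠ []) : l.getLast hne = a := by
  rw [List.getLast?_eq_getLast (l := l) hne] at h; exact Option.some.inj h

/-- Crossing construction: indices `[0..j] ++ [k-1, ..., j+1]`. -/
lemma crossing_cycle_list (G : SimpleGraph V) (v : ℕ → V) {k : ℕ} (hk3 : 3 ≤ k)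
    (hinj : ∀ i < k, ∀ j < k, v i = v j → i = j)
    (hch : ∀ i, i + 1 < k → G.Adj (v i) (v (i+1)))
    {j : ℕ} (hj1 : 1 ≤ j) (hj2 : j ≤ k - 2)
    (ha : G.Adj (v 0) (v (j+1))) (hb : G.Adj (v (k-1)) (v j)) :
    ∃ C : List V, ∃ hCne : C ≠ [], C.Nodup ∧ C.IsChain G.Adj ∧
      G.Adj (C.getLast hCne) (C.head hCne) ∧ (∀ x, x ∈ C ↔ ∃ i < k, v i = x) ∧
      C.length = k := by
  set l : List ℕ := List.range' 0 (j+1) ++ (List.range' (j+1) (k-1-j)).reverse with hl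
  have hk2 : 0 < k - 1 - j := by omega
  have hne : l ≠ [] := by
    rw [hl]; intro h
    rcases List.append_eq_nil_iff.mp h with ⟨h1, _⟩
    simpa using congrArg List.length h1
  have hlen : l.length = k := by rw [hl]; simp; omega
  have h1 : ∀ m ∈ l, m < k := by
    intro m hm
    rw [hl] at hm
    rcases List.mem_append.mp hm with hm | hm
    · rw [List.mem_range'_1] at hm; omega
    · rw [List.mem_reverse, List.mem_range'_1] at hm; omega
  have h2 : l.Nodup := by
    rw [hl, List.nodup_append']
    refine ⟨List.nodup_range', List.nodup_reverse.mpr (List.nodup_range'), ?_⟩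
    intro m hm hm2
    rw [List.mem_range'_1] at hm
    rw [List.mem_reverse, List.mem_range'_1] at hm2
    omega
  have h3 : ∀ m, m < k → m ∈ l := by
    intro m hm
    rw [hl, List.mem_append, List.mem_range'_1, List.mem_reverse, List.mem_range'_1]
    omega
  have h4 : l.IsChain (fun a b => G.Adj (v a) (v b)) := by
    rw [hl, List.isChain_append]
    refine ⟨chain'_range' _ _ (fun m hm1 hm2 => hch m (by omega)), ?_, ?_⟩
    · rw [List.isChain_reverse]
      exact chain'_range' _ _ (fun m hm1 hm2 => (hch m (by omega)).symm)
    · intro a hha b hhb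
      rw [getLast?_range'_pos (by omega), Option.mem_def, Option.some.injEq] at hha
      rw [List.head?_reverse, getLast?_range'_pos hk2, Option.mem_def, Option.some.injEq] at hhb
      subst hha; subst hhb
      have e1 : j + 1 + (k - 1 - j) - 1 = k - 1 := by omega
      have e2 : 0 + (j + 1) - 1 = j := by omega
      rw [e1, e2]
      exact hb.symm
  have h5 : G.Adj (v (l.getLast hne)) (v (l.head hne)) := by
    have hlast : l.getLast hne = j + 1 := by
      apply getLast_of_getLast?
      rw [hl, List.getLast?_append, List.getLast?_reverse, head?_range' hk2]
      rfl
    have hhead : l.head hne = 0 := by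
      apply head_of_head?
      rw [hl, List.head?_append, head?_range' (by omega)]
      rfl
    rw [hlast, hhead]
    exact ha.symm
  obtain ⟨C, hCne, c1, c2, c3, c4, c5⟩ := cycle_list_of_idx G v k hinj l h1 h2 h3 h4 hne h5
  exact ⟨C, hCne, c1, c2, c3, c4, by rw [c5, hlen]⟩

/-- Simple closure: indices `[0..k-1]`. -/
lemma closure_cycle_list (G : SimpleGraph V) (v : ℕ → V) {k : ℕ} (hk3 : 3 ≤ k)
    (hinj : ∀ i < k, ∀ j < k, v i = v j → i = j)
    (hch : ∀ i, i + 1 < k → G.Adj (v i) (v (i+1)))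
    (ha : G.Adj (v (k-1)) (v 0)) :
    ∃ C : List V, ∃ hCne : C ≠ [], C.Nodup ∧ C.IsChain G.Adj ∧
      G.Adj (C.getLast hCne) (C.head hCne) ∧ (∀ x, x ∈ C ↔ ∃ i < k, v i = x) ∧
      C.length = k := by
  have hne : (List.range' 0 k) ≠ [] := by
    intro h
    have := congrArg List.length h
    simp at this
    omega
  have h1 : ∀ m ∈ List.range' 0 k, m < k := by
    intro m hm; rw [List.mem_range'_1] at hm; omega
  have h3 : ∀ m, m < k → m ∈ List.range' 0 k := by
    intro m hm; rw [List.mem_range'_1]; omega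
  have h4 := chain'_range' (R := fun a b => G.Adj (v a) (v b)) 0 k
    (fun m hm1 hm2 => hch m (by omega))
  have h5 : G.Adj (v ((List.range' 0 k).getLast hne)) (v ((List.range' 0 k).head hne)) := by
    have hlast : (List.range' 0 k).getLast hne = k - 1 := by
      apply getLast_of_getLast?
      rw [getLast?_range'_pos (by omega)]
      congr 1
      omega
    have hhead : (List.range' 0 k).head hne = 0 := by
      apply head_of_head?
      rw [head?_range' (by omega)]
    rw [hlast, hhead]
    exact ha
  obtain ⟨C, hCne, c1, c2, c3, c4, c5⟩ :=
    cycle_list_of_idx G v k hinj _ h1 (List.nodup_range') h3 h4 hne h5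
  exact ⟨C, hCne, c1, c2, c3, c4, by rw [c5]; simp⟩

lemma ham_of_cycle_list_cover (G : SimpleGraph V) [Fintype V] (hn : 3 ≤ Fintype.card V)
    {n : ℕ} (hcard : n = Fintype.card V) (v : ℕ → V) (hsurj : ∀ x, ∃ i < n, v i = x)
    (C : List V) (hCne : C ≠ []) (h : C.Nodup ∧ C.IsChain G.Adj ∧
      G.Adj (C.getLast hCne) (C.head hCne) ∧ (∀ x, x ∈ C ↔ ∃ i < n, v i = x) ∧
      C.length = n) : G.IsHamiltonian :=
  isHamiltonian_of_cycle_list G hn C hCne h.1 (fun x => (h.2.2.2.1 x).mpr (hsurj x)) h.2.1 h.2.2.1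

lemma crossing_cycle (G : SimpleGraph V) [Fintype V] (hn : 3 ≤ Fintype.card V)
    {n : ℕ} (hcard : n = Fintype.card V)
    (v : ℕ → V) (hinj : ∀ i < n, ∀ j < n, v i = v j → i = j) (hsurj : ∀ x, ∃ i < n, v i = x)
    (hch : ∀ i, i + 1 < n → G.Adj (v i) (v (i+1)))
    {j : ℕ} (hj1 : 1 ≤ j) (hj2 : j ≤ n - 2)
    (ha : G.Adj (v 0) (v (j+1))) (hb : G.Adj (v (n-1)) (v j)) : G.IsHamiltonian := by
  obtain ⟨C, hCne, hC⟩ :=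
    crossing_cycle_list G v (by omega : 3 ≤ n) hinj hch hj1 hj2 ha hb
  exact ham_of_cycle_list_cover G hn hcard v hsurj C hCne hC

lemma closure_cycle (G : SimpleGraph V) [Fintype V] (hn : 3 ≤ Fintype.card V)
    {n : ℕ} (hcard : n = Fintype.card V)
    (v : ℕ → V) (hinj : ∀ i < n, ∀ j < n, v i = v j → i = j) (hsurj : ∀ x, ∃ i < n, v i = x)
    (hch : ∀ i, i + 1 < n → G.Adj (v i) (v (i+1)))
    (ha : G.Adj (v (n-1)) (v 0)) : G.IsHamiltonian := by
  have hn3 : 3 ≤ n := hcard ▸ hn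
  obtain ⟨C, hCne, hC⟩ := closure_cycle_list G v hn3 hinj hch ha
  exact ham_of_cycle_list_cover G hn hcard v hsurj C hCne hC

lemma hp_xor (G : SimpleGraph V) [Fintype V] [DecidableRel G.Adj]
    {n : ℕ} (hcard : n = Fintype.card V) (hn3 : 3 ≤ n) (hdeg : n ≤ 2 * G.minDegree + 1)
    (hham : ¬ G.IsHamiltonian)
    (v : ℕ → V) (hinj : ∀ i < n, ∀ j < n, v i = v j → i = j)
    (hsurj : ∀ x, ∃ i < n, v i = x)
    (hch : ∀ i, i + 1 < n → G.Adj (v i) (v (i+1)))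
    (hends : ¬ G.Adj (v 0) (v (n-1))) :
    n = 2 * G.minDegree + 1 ∧
      ((Finset.range (n-1)).filter (fun i => G.Adj (v 0) (v (i+1)))).card = G.minDegree ∧
      (∀ i, i ≤ n - 2 → (G.Adj (v 0) (v (i+1)) ↔ ¬ G.Adj (v (n-1)) (v i))) := by
  have hn' : 3 ≤ Fintype.card V := hcard ▸ hn3
  have hcross : ∀ j, j ≤ n - 2 → G.Adj (v 0) (v (j+1)) → G.Adj (v (n-1)) (v j) → False := by
    intro j hj ha hb
    rcases Nat.eq_zero_or_pos j with rfl | hj1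
    · exact hends hb.symm
    · exact hham (crossing_cycle G hn' hcard v hinj hsurj hch hj1 hj ha hb)
  set NP := (Finset.range (n-1)).filter (fun i => G.Adj (v 0) (v (i+1))) with hNP
  set NM := (Finset.range (n-1)).filter (fun i => G.Adj (v (n-1)) (v i)) with hNM
  have hNPcard : NP.card = G.degree (v 0) := by
    rw [← G.card_neighborFinset_eq_degree]
    apply Finset.card_bij (fun i _ => v (i+1))
    · intro a haa
      rw [hNP, Finset.mem_filter, Finset.mem_range] at haa
      rw [SimpleGraph.mem_neighborFinset]
      exact haa.2
    · intro a ha1 b hb1 hab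
      rw [hNP, Finset.mem_filter, Finset.mem_range] at ha1 hb1
      have := hinj (a+1) (by omega) (b+1) (by omega) hab
      omega
    · intro x hx
      rw [SimpleGraph.mem_neighborFinset] at hx
      obtain ⟨m, hm, rfl⟩ := hsurj x
      have hm0 : m ≠ 0 := by
        intro h; subst h; exact G.irrefl hx
      refine ⟨m - 1, ?_, ?_⟩
      · rw [hNP, Finset.mem_filter, Finset.mem_range]
        constructor
        · omega
        · have : m - 1 + 1 = m := by omega
          rw [this]; exact hx
      · congr 1; omega
  have hNMcard : NM.card = G.degree (v (n-1)) := by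
    rw [← G.card_neighborFinset_eq_degree]
    apply Finset.card_bij (fun i _ => v i)
    · intro a haa
      rw [hNM, Finset.mem_filter, Finset.mem_range] at haa
      rw [SimpleGraph.mem_neighborFinset]
      exact haa.2
    · intro a ha1 b hb1 hab
      rw [hNM, Finset.mem_filter, Finset.mem_range] at ha1 hb1
      exact hinj a (by omega) b (by omega) hab
    · intro x hx
      rw [SimpleGraph.mem_neighborFinset] at hx
      obtain ⟨m, hm, rfl⟩ := hsurj x
      have hm0 : m ≠ n - 1 := by
        intro h; subst h; exact G.irrefl hx
      exact ⟨m, by rw [hNM, Finset.mem_filter, Finset.mem_range]; exact ⟨by omega, hx⟩, rfl⟩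
  have hdisj : Disjoint NP NM := by
    rw [Finset.disjoint_left]
    intro a ha1 ha2
    rw [hNP, Finset.mem_filter, Finset.mem_range] at ha1
    rw [hNM, Finset.mem_filter, Finset.mem_range] at ha2
    exact hcross a (by omega) ha1.2 ha2.2
  have hUcard : NP.card + NM.card ≤ n - 1 := by
    rw [← Finset.card_union_of_disjoint hdisj]
    calc (NP ∪ NM).card ≤ (Finset.range (n-1)).card := by
          apply Finset.card_le_card
          rw [hNP, hNM]
          exact Finset.union_subset (Finset.filter_subset _ _) (Finset.filter_subset _ _)
      _ = n - 1 := Finset.card_range _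
  have hd0 : G.minDegree ≤ G.degree (v 0) := G.minDegree_le_degree _
  have hd1 : G.minDegree ≤ G.degree (v (n-1)) := G.minDegree_le_degree _
  have hEq : NP ∪ NM = Finset.range (n-1) := by
    apply Finset.eq_of_subset_of_card_le
    · rw [hNP, hNM]
      exact Finset.union_subset (Finset.filter_subset _ _) (Finset.filter_subset _ _)
    · rw [Finset.card_range, Finset.card_union_of_disjoint hdisj]
      omega
  refine ⟨by omega, by omega, ?_⟩
  intro i hi
  refine ⟨fun ha hb => hcross i hi ha hb, fun hb => ?_⟩
  by_contra ha
  have hiU : i ∈ NP ∪ NM := by rw [hEq, Finset.mem_range]; omega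
  rcases Finset.mem_union.mp hiU with h | h
  · rw [hNP, Finset.mem_filter] at h; exact ha h.2
  · rw [hNM, Finset.mem_filter] at h; exact hb h.2



lemma exists_ham_enum (G : SimpleGraph V) [Fintype V] [DecidableRel G.Adj]
    (hn3 : 3 ≤ Fintype.card V) (hdeg : Fintype.card V ≤ 2 * G.minDegree + 1)
    (hham : ¬ G.IsHamiltonian) :
    ∃ v : ℕ → V, (∀ i < Fintype.card V, ∀ j < Fintype.card V, v i = v j → i = j) ∧
      (∀ x, ∃ i < Fintype.card V, v i = x) ∧
      (∀ i, i + 1 < Fintype.card V → G.Adj (v i) (v (i+1))) := by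
  set n := Fintype.card V with hn
  have hV : Nonempty V := Fintype.card_pos_iff.mp (by omega)
  have hconn := connected_of_deg G hV hdeg
  obtain ⟨L, hne, hnd, hch, hmax⟩ := exists_max_path G hV
  set k := L.length with hk
  have hk1 : 1 ≤ k := by
    cases L
    · simp at hne
    · rw [hk]; simp
  set d : V := Classical.arbitrary V with hd
  set v : ℕ → V := fun i => L.getD i d with hv
  have hget : ∀ i (h : i < k), v i = L.get ⟨i, h⟩ := by
    intro i h
    rw [hv]
    simp only
    rw [List.getD_eq_getElem L d h]
    simp
  have hinj : ∀ i < k, ∀ j < k, v i = v j → i = j := by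
    intro i hi j hj hij
    rw [hget i hi, hget j hj] at hij
    have := List.nodup_iff_injective_get.mp hnd hij
    exact Fin.mk.injEq .. ▸ (by injection this)
  have hmem : ∀ x, x ∈ L ↔ ∃ i, i < k ∧ v i = x := by
    intro x
    rw [List.mem_iff_get]
    constructor
    · rintro ⟨⟨i, hi⟩, rfl⟩; exact ⟨i, hi, hget i hi⟩
    · rintro ⟨i, hi, rfl⟩; exact ⟨⟨i, hi⟩, (hget i hi).symm⟩
  have hchain : ∀ i, i + 1 < k → G.Adj (v i) (v (i+1)) := by
    intro i hi
    rw [hget i (by omega), hget (i+1) hi]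
    exact List.isChain_iff_getElem.mp hch i (by omega)
  have hhead : v 0 = L.head hne := by
    rw [hget 0 (by omega)]
    cases L
    · simp at hne
    · rfl
  have hlastv : v (k-1) = L.getLast hne := by
    rw [hget (k-1) (by omega), List.getLast_eq_getElem]; rfl
  have hnbr0 : ∀ x, G.Adj x (v 0) → x ∈ L := by
    intro x hx
    by_contra hxL
    have h1 : (x :: L).Nodup := by rw [List.nodup_cons]; exact ⟨hxL, hnd⟩
    have h2 : (x :: L).IsChain G.Adj := by
      rw [List.isChain_cons]
      refine ⟨fun y hy => ?_, hch⟩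
      rw [List.head?_eq_head hne, Option.mem_def, Option.some.injEq] at hy
      subst hy
      rw [← hhead]
      exact hx
    have := hmax (x :: L) h1 h2
    simp only [List.length_cons] at this
    omega
  have hnbrl : ∀ x, G.Adj (v (k-1)) x → x ∈ L := by
    intro x hx
    by_contra hxL
    have h1 : (L ++ [x]).Nodup := by
      rw [List.nodup_append']
      refine ⟨hnd, List.nodup_singleton x, ?_⟩
      intro a ha hb
      rw [List.mem_singleton] at hb
      subst hb
      exact hxL ha
    have h2 : (L ++ [x]).IsChain G.Adj := by
      rw [List.isChain_append]
      refine ⟨hch, List.isChain_singleton x, ?_⟩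
      intro a ha b hb
      rw [List.getLast?_eq_getLast (l := L) hne, Option.mem_def, Option.some.injEq] at ha
      subst ha
      rw [List.head?_cons, Option.mem_def, Option.some.injEq] at hb
      subst hb
      rw [← hlastv]
      exact hx
    have := hmax (L ++ [x]) h1 h2
    simp only [List.length_append, List.length_singleton] at this
    omega
  -- degree of v 0 is at most k - 1
  have hdegle : G.minDegree ≤ k - 1 := by
    have hsub : G.neighborFinset (v 0) ⊆ L.toFinset.erase (v 0) := by
      intro x hx
      rw [SimpleGraph.mem_neighborFinset] at hx
      rw [Finset.mem_erase, List.mem_toFinset]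
      exact ⟨(G.ne_of_adj hx.symm), hnbr0 x hx.symm⟩
    have h0L : v 0 ∈ L := by
      rw [hmem]; exact ⟨0, by omega, rfl⟩
    have := Finset.card_le_card hsub
    rw [G.card_neighborFinset_eq_degree] at this
    have hcarderase : (L.toFinset.erase (v 0)).card = k - 1 := by
      rw [Finset.card_erase_of_mem (List.mem_toFinset.mpr h0L), List.toFinset_card_of_nodup hnd]
    rw [hcarderase] at this
    have := G.minDegree_le_degree (v 0)
    omega
  have hkn : k = n := by
    have hkle : k ≤ n := by
      rw [hk, ← List.toFinset_card_of_nodup hnd, hn, ← Finset.card_univ]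
      exact Finset.card_le_card (Finset.subset_univ _)
    by_contra hne2
    have hklt : k < n := by omega
    -- there is a vertex off L
    have hoff : ∃ x, x ∉ L := by
      by_contra hall
      push_neg at hall
      have : n ≤ k := by
        rw [hk, ← List.toFinset_card_of_nodup hnd, hn, ← Finset.card_univ]
        exact Finset.card_le_card (fun x _ => List.mem_toFinset.mpr (hall x))
      omega
    obtain ⟨x₀, hx₀⟩ := hoff
    -- case k = 2 or less is impossible
    rcases Nat.lt_or_ge k 3 with hk3 | hk3
    · -- k ≤ 2 : cross edge from L to outside hits an endpoint of L
      have hk2 : k = 2 := by omega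
      obtain ⟨w⟩ := hconn.preconnected (v 0) x₀
      obtain ⟨u, z, hu, hz, huz⟩ := cross_edge_of_walk G {y | y ∈ L} w
        (by rw [Set.mem_setOf_eq, hmem]; exact ⟨0, by omega, rfl⟩)
        (by rw [Set.mem_setOf_eq]; exact hx₀)
      rw [Set.mem_setOf_eq, hmem] at hu
      obtain ⟨i, hi, rfl⟩ := hu
      have : i = 0 ∨ i = k - 1 := by omega
      rcases this with rfl | rfl
      · exact hz (hnbr0 z huz.symm)
      · exact hz (hnbrl z huz)
    · -- k ≥ 3
      have hcyc : ∀ C : List V, ∀ hCne : C ≠ [], C.Nodup → C.IsChain G.Adj →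
          G.Adj (C.getLast hCne) (C.head hCne) → (∀ y, y ∈ C ↔ ∃ i < k, v i = y) →
          C.length = k → False := by
        intro C hCne c1 c2 c3 c4 c5
        have hx₀C : x₀ ∉ C := by
          rw [c4]
          rintro ⟨i, hi, rfl⟩
          exact hx₀ ((hmem (v i)).mpr ⟨i, hi, rfl⟩)
        have hheadC : C.head hCne ∈ C := List.head_mem hCne
        obtain ⟨w⟩ := hconn.preconnected (C.head hCne) x₀
        obtain ⟨u, z, hu, hz, huz⟩ := cross_edge_of_walk G {y | y ∈ C} w hheadC hx₀C
        obtain ⟨P, p1, p2, p3⟩ := extend_cycle G C c1 c2 hCne c3 z u hu hz huz.symm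
        have := hmax P p1 p2
        rw [p3, c5] at this
        omega
      have hnocl : ¬ G.Adj (v (k-1)) (v 0) := by
        intro hcl
        obtain ⟨C, hCne, c1, c2, c3, c4, c5⟩ := closure_cycle_list G v hk3 hinj hchain hcl
        exact hcyc C hCne c1 c2 c3 c4 c5
      have hnocr : ∀ j, 1 ≤ j → j ≤ k - 2 → G.Adj (v 0) (v (j+1)) →
          G.Adj (v (k-1)) (v j) → False := by
        intro j hj1 hj2 ha hb
        obtain ⟨C, hCne, c1, c2, c3, c4, c5⟩ :=
          crossing_cycle_list G v hk3 hinj hchain hj1 hj2 ha hb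
        exact hcyc C hCne c1 c2 c3 c4 c5
      -- counting
      set NP := (Finset.range (k-1)).filter (fun i => G.Adj (v 0) (v (i+1))) with hNP
      set NM := (Finset.range (k-1)).filter (fun i => G.Adj (v (k-1)) (v i)) with hNM
      have hNPcard : NP.card = G.degree (v 0) := by
        rw [← G.card_neighborFinset_eq_degree]
        apply Finset.card_bij (fun i _ => v (i+1))
        · intro a haa
          rw [hNP, Finset.mem_filter, Finset.mem_range] at haa
          rw [SimpleGraph.mem_neighborFinset]
          exact haa.2
        · intro a ha1 b hb1 hab
          rw [hNP, Finset.mem_filter, Finset.mem_range] at ha1 hb1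
          have := hinj (a+1) (by omega) (b+1) (by omega) hab
          omega
        · intro x hx
          rw [SimpleGraph.mem_neighborFinset] at hx
          have hxL : x ∈ L := hnbr0 x hx.symm
          obtain ⟨m, hm, rfl⟩ := (hmem x).mp hxL
          have hm0 : m ≠ 0 := by
            intro h; subst h; exact G.irrefl hx
          refine ⟨m - 1, ?_, ?_⟩
          · rw [hNP, Finset.mem_filter, Finset.mem_range]
            constructor
            · omega
            · have : m - 1 + 1 = m := by omega
              rw [this]; exact hx
          · congr 1; omega
      have hNMcard : NM.card = G.degree (v (k-1)) := by
        rw [← G.card_neighborFinset_eq_degree]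
        apply Finset.card_bij (fun i _ => v i)
        · intro a haa
          rw [hNM, Finset.mem_filter, Finset.mem_range] at haa
          rw [SimpleGraph.mem_neighborFinset]
          exact haa.2
        · intro a ha1 b hb1 hab
          rw [hNM, Finset.mem_filter, Finset.mem_range] at ha1 hb1
          exact hinj a (by omega) b (by omega) hab
        · intro x hx
          rw [SimpleGraph.mem_neighborFinset] at hx
          have hxL : x ∈ L := hnbrl x hx
          obtain ⟨m, hm, rfl⟩ := (hmem x).mp hxL
          have hm0 : m ≠ k - 1 := by
            intro h; subst h; exact G.irrefl hx
          exact ⟨m, by rw [hNM, Finset.mem_filter, Finset.mem_range]; exact ⟨by omega, hx⟩, rfl⟩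
      have hdisj : Disjoint NP NM := by
        rw [Finset.disjoint_left]
        intro a ha1 ha2
        rw [hNP, Finset.mem_filter, Finset.mem_range] at ha1
        rw [hNM, Finset.mem_filter, Finset.mem_range] at ha2
        rcases Nat.eq_zero_or_pos a with rfl | ha0
        · exact hnocl ha2.2
        · exact hnocr a ha0 (by omega) ha1.2 ha2.2
      have hUcard : NP.card + NM.card ≤ k - 1 := by
        rw [← Finset.card_union_of_disjoint hdisj]
        calc (NP ∪ NM).card ≤ (Finset.range (k-1)).card := by
              apply Finset.card_le_card
              rw [hNP, hNM]
              exact Finset.union_subset (Finset.filter_subset _ _) (Finset.filter_subset _ _)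
          _ = k - 1 := Finset.card_range _
      have hd0 : G.minDegree ≤ G.degree (v 0) := G.minDegree_le_degree _
      have hd1 : G.minDegree ≤ G.degree (v (k-1)) := G.minDegree_le_degree _
      omega
  -- k = n : Hamilton path
  refine ⟨v, ?_, ?_, ?_⟩
  · rw [← hkn]; exact hinj
  · intro x
    have hLall : x ∈ L := by
      have : L.toFinset = Finset.univ := by
        apply Finset.eq_of_subset_of_card_le (Finset.subset_univ _)
        rw [List.toFinset_card_of_nodup hnd, Finset.card_univ, ← hn, ← hkn]
      rw [← List.mem_toFinset, this]
      exact Finset.mem_univ x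
    obtain ⟨i, hi, rfl⟩ := (hmem x).mp hLall
    exact ⟨i, by omega, rfl⟩
  · rw [← hkn]; exact hchain



lemma rot_rules (G : SimpleGraph V) [Fintype V] [DecidableRel G.Adj]
    {n : ℕ} (hcard : n = Fintype.card V) (hn3 : 3 ≤ n) (hdeg : n ≤ 2 * G.minDegree + 1)
    (hham : ¬ G.IsHamiltonian)
    (v : ℕ → V) (hinj : ∀ i < n, ∀ j < n, v i = v j → i = j)
    (hsurj : ∀ x, ∃ i < n, v i = x)
    (hch : ∀ i, i + 1 < n → G.Adj (v i) (v (i+1)))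
    (hends : ¬ G.Adj (v 0) (v (n-1)))
    {i : ℕ} (hi : i ≤ n - 2) (hiNP : G.Adj (v 0) (v (i+1))) :
    (∀ l, i + 2 ≤ l → l ≤ n - 1 → (G.Adj (v i) (v l) ↔ G.Adj (v 0) (v l))) ∧
    (∀ l, l < i → (G.Adj (v i) (v l) ↔ G.Adj (v 0) (v (l+2)))) := by
  have xorb := (hp_xor G hcard hn3 hdeg hham v hinj hsurj hch hends).2.2
  have hnadj : ¬ G.Adj (v (n-1)) (v i) := (xorb i hi).mp hiNP
  set v' : ℕ → V := fun m => if m ≤ i then v (i - m) else v m with hv'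
  have hle : ∀ m, m ≤ i → v' m = v (i - m) := by
    intro m hm; rw [hv']; simp only [if_pos hm]
  have hgt : ∀ m, i < m → v' m = v m := by
    intro m hm; rw [hv']; simp only [if_neg (by omega : ¬ m ≤ i)]
  have h0 : v' 0 = v i := by rw [hle 0 (by omega)]; congr 1
  have hlast : v' (n-1) = v (n-1) := hgt (n-1) (by omega)
  have hinj' : ∀ a < n, ∀ b < n, v' a = v' b → a = b := by
    intro a ha b hb hab
    rcases le_or_gt a i with h1 | h1 <;> rcases le_or_gt b i with h2 | h2
    · rw [hle a h1, hle b h2] at hab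
      have := hinj (i-a) (by omega) (i-b) (by omega) hab
      omega
    · rw [hle a h1, hgt b h2] at hab
      have := hinj (i-a) (by omega) b hb hab
      omega
    · rw [hgt a h1, hle b h2] at hab
      have := hinj a ha (i-b) (by omega) hab
      omega
    · rw [hgt a h1, hgt b h2] at hab
      exact hinj a ha b hb hab
  have hsurj' : ∀ x, ∃ m < n, v' m = x := by
    intro x
    obtain ⟨j, hj, rfl⟩ := hsurj x
    rcases le_or_gt j i with h1 | h1
    · refine ⟨i - j, by omega, ?_⟩
      rw [hle (i-j) (by omega)]
      congr 1
      omega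
    · exact ⟨j, hj, hgt j h1⟩
  have hch' : ∀ m, m + 1 < n → G.Adj (v' m) (v' (m+1)) := by
    intro m hm
    rcases Nat.lt_or_ge (m+1) (i+1) with h1 | h1
    · rw [hle m (by omega), hle (m+1) (by omega)]
      have e : (i - (m+1)) + 1 = i - m := by omega
      have := hch (i - (m+1)) (by omega)
      rw [e] at this
      exact this.symm
    · rcases Nat.eq_or_lt_of_le h1 with h2 | h2
      · have hmi : m = i := by omega
        subst hmi
        rw [hle m (by omega), hgt (m+1) (by omega), Nat.sub_self]
        exact hiNP
      · rw [hgt m (by omega), hgt (m+1) (by omega)]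
        exact hch m hm
  have hends' : ¬ G.Adj (v' 0) (v' (n-1)) := by
    rw [h0, hlast]
    intro h
    exact hnadj h.symm
  have xorr := (hp_xor G hcard hn3 hdeg hham v' hinj' hsurj' hch' hends').2.2
  constructor
  · intro l hl1 hl2
    have h1 := xorr (l-1) (by omega)
    rw [h0, hlast] at h1
    rw [hgt (l-1+1) (by omega), hgt (l-1) (by omega)] at h1
    have e : l - 1 + 1 = l := by omega
    rw [e] at h1
    have h2 := xorb (l-1) (by omega)
    rw [e] at h2
    rw [h1, ← h2]
  · intro l hl
    have h1 := xorr (i - l - 1) (by omega)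
    rw [h0, hlast] at h1
    rw [hle (i - l - 1 + 1) (by omega), hle (i - l - 1) (by omega)] at h1
    have e1 : i - (i - l - 1 + 1) = l := by omega
    have e2 : i - (i - l - 1) = l + 1 := by omega
    rw [e1, e2] at h1
    have h2 := xorb (l+1) (by omega)
    have e3 : l + 1 + 1 = l + 2 := by omega
    rw [e3] at h2
    rw [h1, ← h2]



lemma getLast?_cons_or {α : Type*} (a : α) (l : List α) :
    (a :: l).getLast? = l.getLast?.or (some a) := by
  rw [← List.singleton_append, List.getLast?_append]
  rfl

lemma down_closed_range {r : ℕ} (S : Finset ℕ) (hsub : S ⊆ Finset.range (2*r))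
    (hcard : S.card = r) (hdc : ∀ k, k + 1 ∈ S → k ∈ S) : S = Finset.range r := by
  have hsteps : ∀ d j, j ∈ S → j - d ∈ S := by
    intro d
    induction d with
    | zero => intro j hj; simpa using hj
    | succ d ih =>
      intro j hj
      have h1 := ih j hj
      rcases Nat.eq_zero_or_pos (j - d) with h2 | h2
      · have : j - (d+1) = 0 := by omega
        rw [this]
        rw [h2] at h1
        exact h1
      · have : (j - (d+1)) + 1 = j - d := by omega
        apply hdc
        rw [this]
        exact h1
  have hsub' : S ⊆ Finset.range r := by
    intro j hj
    rw [Finset.mem_range]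
    by_contra hge
    have : Finset.range (j+1) ⊆ S := by
      intro i hi
      rw [Finset.mem_range] at hi
      have := hsteps (j - i) j hj
      rw [show j - (j - i) = i from by omega] at this
      exact this
    have := Finset.card_le_card this
    rw [Finset.card_range, hcard] at this
    omega
  apply Finset.eq_of_subset_of_card_le hsub'
  rw [Finset.card_range, hcard]

lemma no_consec_evens {r : ℕ} (hr : 1 ≤ r) (S : Finset ℕ)
    (hsub : S ⊆ Finset.range (2*r)) (hcard : S.card = r) (h0 : 0 ∈ S)
    (htop : 2*r - 1 ∉ S) (hnc : ∀ j, j ∈ S → j + 1 ∉ S) :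
    S = (Finset.range r).image (fun j => 2*j) := by
  have hinj1 : ∀ x ∈ S, ∀ y ∈ S, (x+1)/2 = (y+1)/2 → x = y := by
    intro x hx y hy hxy
    by_contra hne
    have : y = x + 1 ∨ x = y + 1 := by omega
    rcases this with rfl | h
    · exact hnc x hx hy
    · exact hnc y hy (h ▸ hx)
  have hinj2 : ∀ x ∈ S, ∀ y ∈ S, x/2 = y/2 → x = y := by
    intro x hx y hy hxy
    by_contra hne
    have : y = x + 1 ∨ x = y + 1 := by omega
    rcases this with rfl | h
    · exact hnc x hx hy
    · exact hnc y hy (h ▸ hx)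
  have hmle : ∀ m ∈ S, m ≤ 2*r - 2 := by
    intro m hm
    have := hsub hm
    rw [Finset.mem_range] at this
    have : m ≠ 2*r - 1 := fun h => htop (h ▸ hm)
    omega
  have hfle : ∀ j, (S.filter (· ≤ 2*j)).card ≤ j + 1 := by
    intro j
    refine le_trans (Finset.card_le_card_of_injOn (t := Finset.range (j+1))
      (fun x => (x+1)/2) ?_ ?_) (by rw [Finset.card_range])
    · intro a ha
      rw [Finset.mem_coe, Finset.mem_filter] at ha
      rw [Finset.mem_coe, Finset.mem_range]
      show (a + 1) / 2 < j + 1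
      omega
    · intro a ha b hb hab
      rw [Finset.mem_coe, Finset.mem_filter] at ha hb
      exact hinj1 a ha.1 b hb.1 hab
  have hgle : ∀ j, (S.filter (fun x => ¬ x ≤ 2*j)).card ≤ r - 1 - j := by
    intro j
    refine le_trans (Finset.card_le_card_of_injOn (t := Finset.Icc (j+1) (r-1))
      (fun x => (x+1)/2) ?_ ?_) (by rw [Nat.card_Icc]; omega)
    · intro a ha
      rw [Finset.mem_coe, Finset.mem_filter] at ha
      have := hmle a ha.1
      rw [Finset.mem_coe, Finset.mem_Icc]
      show j + 1 ≤ (a + 1) / 2 ∧ (a + 1) / 2 ≤ r - 1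
      omega
    · intro a ha b hb hab
      rw [Finset.mem_coe, Finset.mem_filter] at ha hb
      exact hinj1 a ha.1 b hb.1 hab
  have hsplit : ∀ j, (S.filter (· ≤ 2*j)).card + (S.filter (fun x => ¬ x ≤ 2*j)).card = r := by
    intro j
    rw [Finset.card_filter_add_card_filter_not, hcard]
  have hfeq : ∀ j, j < r → (S.filter (· ≤ 2*j)).card = j + 1 := by
    intro j hj
    have h1 := hfle j
    have h2 := hgle j
    have h3 := hsplit j
    omega
  have heven : ∀ j, j < r → 2*j ∈ S := by
    intro j hj
    rcases Nat.eq_zero_or_pos j with rfl | hj0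
    · simpa using h0
    by_contra h2j
    have hss : S.filter (· ≤ 2*j) ⊆ S.filter (· ≤ 2*j - 1) := by
      intro a ha
      rw [Finset.mem_filter] at ha ⊢
      refine ⟨ha.1, ?_⟩
      have : a ≠ 2*j := fun h => h2j (h ▸ ha.1)
      omega
    have hle2 : (S.filter (· ≤ 2*j - 1)).card ≤ j := by
      refine le_trans (Finset.card_le_card_of_injOn (t := Finset.range j)
        (fun x => x/2) ?_ ?_) (by rw [Finset.card_range])
      · intro a ha
        rw [Finset.mem_coe, Finset.mem_filter] at ha
        rw [Finset.mem_coe, Finset.mem_range]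
        show a / 2 < j
        omega
      · intro a ha b hb hab
        rw [Finset.mem_coe, Finset.mem_filter] at ha hb
        exact hinj2 a ha.1 b hb.1 hab
    have := Finset.card_le_card hss
    rw [hfeq j hj] at this
    omega
  have hEsub : (Finset.range r).image (fun j => 2*j) ⊆ S := by
    intro m hm
    rw [Finset.mem_image] at hm
    obtain ⟨j, hj, rfl⟩ := hm
    exact heven j (Finset.mem_range.mp hj)
  symm
  apply Finset.eq_of_subset_of_card_le hEsub
  rw [Finset.card_image_of_injective _ (fun a b h => by omega), Finset.card_range, hcard]


lemma pair_rise_cycle1 (G : SimpleGraph V) [Fintype V] (hn : 3 ≤ Fintype.card V)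
    {n : ℕ} (hcard : n = Fintype.card V)
    (v : ℕ → V) (hinj : ∀ i < n, ∀ j < n, v i = v j → i = j) (hsurj : ∀ x, ∃ i < n, v i = x)
    (hch : ∀ i, i + 1 < n → G.Adj (v i) (v (i+1)))
    {p q : ℕ} (hpq : p + 2 ≤ q) (hq : q ≤ n - 2)
    (e1 : G.Adj (v p) (v (q+1))) (e2 : G.Adj (v (n-1)) (v q))
    (e3 : G.Adj (v 0) (v (p+1))) : G.IsHamiltonian := by
  have hn3 : 3 ≤ n := hcard ▸ hn
  set A : List ℕ := List.range' 0 (p+1) with hA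
  set B : List ℕ := List.range' (q+1) (n-1-q) with hB
  set C : List ℕ := (List.range' (p+1) (q-p)).reverse with hC
  have hBne : B ≠ [] := by rw [hB]; intro h; have := congrArg List.length h; simp at this; omega
  have hCne : C ≠ [] := by rw [hC]; intro h; have := congrArg List.length h; simp at this; omega
  set l : List ℕ := A ++ (B ++ C) with hl
  have hne : l ≠ [] := by
    rw [hl]; intro h; rcases List.append_eq_nil_iff.mp h with ⟨h1, _⟩
    have := congrArg List.length h1; simp [hA] at this
  have memA : ∀ m, m ∈ A ↔ m ≤ p := by
    intro m; rw [hA, List.mem_range'_1]; omega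
  have memB : ∀ m, m ∈ B ↔ q + 1 ≤ m ∧ m < q + 1 + (n-1-q) := by
    intro m; rw [hB, List.mem_range'_1]
  have memC : ∀ m, m ∈ C ↔ p + 1 ≤ m ∧ m ≤ q := by
    intro m; rw [hC, List.mem_reverse, List.mem_range'_1]; omega
  apply isHamiltonian_of_idx G hn v n hcard hinj hsurj l
  · intro m hm
    rw [hl, List.mem_append, List.mem_append, memA, memB, memC] at hm
    omega
  · rw [hl, List.nodup_append', List.nodup_append']
    refine ⟨by rw [hA]; exact List.nodup_range',
      ⟨by rw [hB]; exact List.nodup_range',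
       by rw [hC]; exact List.nodup_reverse.mpr (List.nodup_range'), ?_⟩, ?_⟩
    · intro m hm hm2; rw [memB] at hm; rw [memC] at hm2; omega
    · intro m hm hm2
      rw [memA] at hm
      rw [List.mem_append, memB, memC] at hm2
      omega
  · intro m hm
    rw [hl, List.mem_append, List.mem_append, memA, memB, memC]
    omega
  · rw [hl, List.isChain_append]
    refine ⟨by rw [hA]; exact chain'_range' _ _ (fun m h1 h2 => hch m (by omega)), ?_, ?_⟩
    · rw [List.isChain_append]
      refine ⟨by rw [hB]; exact chain'_range' _ _ (fun m h1 h2 => hch m (by omega)), ?_, ?_⟩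
      · rw [hC, List.isChain_reverse]
        exact chain'_range' _ _ (fun m h1 h2 => (hch m (by omega)).symm)
      · intro a ha b hb
        rw [hB, getLast?_range'_pos (by omega), Option.mem_def, Option.some.injEq] at ha
        rw [hC, List.head?_reverse, getLast?_range'_pos (by omega), Option.mem_def,
          Option.some.injEq] at hb
        subst ha; subst hb
        have e : q + 1 + (n-1-q) - 1 = n - 1 := by omega
        have e' : p + 1 + (q-p) - 1 = q := by omega
        rw [e, e']
        exact e2
    · intro a ha b hb
      rw [hA, getLast?_range'_pos (by omega), Option.mem_def, Option.some.injEq] at ha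
      rw [List.head?_append, hB, head?_range' (by omega)] at hb
      simp only [Option.some_or, Option.mem_def, Option.some.injEq] at hb
      subst ha; subst hb
      have e : 0 + (p+1) - 1 = p := by omega
      rw [e]
      exact e1
  · have hlast : l.getLast hne = p + 1 := by
      apply getLast_of_getLast?
      rw [hl, List.getLast?_append, List.getLast?_append, hC, List.getLast?_reverse,
        head?_range' (by omega)]
      rfl
    have hhead : l.head hne = 0 := by
      apply head_of_head?
      rw [hl, List.head?_append, hA, head?_range' (by omega)]
      rfl
    rw [hlast, hhead]
    exact e3.symm

lemma pair_rise_cycle2 (G : SimpleGraph V) [Fintype V] (hn : 3 ≤ Fintype.card V)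
    {n : ℕ} (hcard : n = Fintype.card V)
    (v : ℕ → V) (hinj : ∀ i < n, ∀ j < n, v i = v j → i = j) (hsurj : ∀ x, ∃ i < n, v i = x)
    (hch : ∀ i, i + 1 < n → G.Adj (v i) (v (i+1)))
    {p q : ℕ} (hqp : q + 1 ≤ p) (hp : p + 2 ≤ n - 2)
    (e1 : G.Adj (v (n-1)) (v q)) (e2 : G.Adj (v 0) (v (p+1)))
    (e3 : G.Adj (v (q+1)) (v (p+2))) : G.IsHamiltonian := by
  have hn3 : 3 ≤ n := hcard ▸ hn
  set A : List ℕ := (List.range' 0 (q+1)).reverse with hA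
  set B : List ℕ := (List.range' (q+1) (p+1-q)).reverse with hB
  set C : List ℕ := List.range' (p+2) (n-2-(p+1)) with hC
  have hAne : A ≠ [] := by rw [hA]; intro h; have := congrArg List.length h; simp at this
  have hBne : B ≠ [] := by rw [hB]; intro h; have := congrArg List.length h; simp at this; omega
  have hCne : C ≠ [] := by rw [hC]; intro h; have := congrArg List.length h; simp at this; omega
  set l : List ℕ := (n-1) :: (A ++ (B ++ C)) with hl
  have hne : l ≠ [] := by rw [hl]; exact List.cons_ne_nil _ _
  have memA : ∀ m, m ∈ A ↔ m ≤ q := by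
    intro m; rw [hA, List.mem_reverse, List.mem_range'_1]; omega
  have memB : ∀ m, m ∈ B ↔ q + 1 ≤ m ∧ m ≤ p + 1 := by
    intro m; rw [hB, List.mem_reverse, List.mem_range'_1]; omega
  have memC : ∀ m, m ∈ C ↔ p + 2 ≤ m ∧ m ≤ n - 2 := by
    intro m; rw [hC, List.mem_range'_1]; omega
  apply isHamiltonian_of_idx G hn v n hcard hinj hsurj l
  · intro m hm
    rw [hl, List.mem_cons, List.mem_append, List.mem_append, memA, memB, memC] at hm
    omega
  · rw [hl, List.nodup_cons, List.nodup_append', List.nodup_append']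
    refine ⟨?_, by rw [hA]; exact List.nodup_reverse.mpr (List.nodup_range'),
      ⟨by rw [hB]; exact List.nodup_reverse.mpr (List.nodup_range'),
       by rw [hC]; exact List.nodup_range', ?_⟩, ?_⟩
    · rw [List.mem_append, List.mem_append, memA, memB, memC]
      omega
    · intro m hm hm2; rw [memB] at hm; rw [memC] at hm2; omega
    · intro m hm hm2
      rw [memA] at hm
      rw [List.mem_append, memB, memC] at hm2
      omega
  · intro m hm
    rw [hl, List.mem_cons, List.mem_append, List.mem_append, memA, memB, memC]
    omega
  · rw [hl, List.isChain_cons]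
    constructor
    · intro y hy
      rw [List.head?_append, hA, List.head?_reverse, getLast?_range'_pos (by omega)] at hy
      simp only [Option.some_or, Option.mem_def, Option.some.injEq] at hy
      subst hy
      have e : 0 + (q+1) - 1 = q := by omega
      rw [e]
      exact e1
    · rw [List.isChain_append]
      refine ⟨?_, ?_, ?_⟩
      · rw [hA, List.isChain_reverse]
        exact chain'_range' _ _ (fun m h1 h2 => (hch m (by omega)).symm)
      · rw [List.isChain_append]
        refine ⟨?_, ?_, ?_⟩
        · rw [hB, List.isChain_reverse]
          exact chain'_range' _ _ (fun m h1 h2 => (hch m (by omega)).symm)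
        · rw [hC]
          exact chain'_range' _ _ (fun m h1 h2 => hch m (by omega))
        · intro a ha b hb
          rw [hB, List.getLast?_reverse, head?_range' (by omega), Option.mem_def,
            Option.some.injEq] at ha
          rw [hC, head?_range' (by omega), Option.mem_def, Option.some.injEq] at hb
          subst ha; subst hb
          exact e3
      · intro a ha b hb
        rw [hA, List.getLast?_reverse, head?_range' (by omega), Option.mem_def,
          Option.some.injEq] at ha
        rw [List.head?_append, hB, List.head?_reverse, getLast?_range'_pos (by omega)] at hb
        simp only [Option.some_or, Option.mem_def, Option.some.injEq] at hb
        subst ha; subst hb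
        have e : q + 1 + (p+1-q) - 1 = p + 1 := by omega
        rw [e]
        exact e2
  · have hlast : l.getLast hne = n - 2 := by
      apply getLast_of_getLast?
      simp only [hl, getLast?_cons_or, List.getLast?_append, hC,
        getLast?_range'_pos (show 0 < n - 2 - (p+1) by omega)]
      simp only [Option.some_or, Option.some.injEq]
      omega
    have hhead : l.head hne = n - 1 :=
      head_of_head? (by rw [hl]; rfl) hne
    rw [hlast, hhead]
    have := hch (n-2) (by omega)
    rw [show n - 2 + 1 = n - 1 from by omega] at this
    exact this


end HamAux

theorem stmt7 {V : Type*} [Fintype V] (G : SimpleGraph V) [DecidableRel G.Adj]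
    (hn : 3 ≤ Fintype.card V)
    (hd : ((Fintype.card V : ℝ) - 1) / 2 ≤ (G.minDegree : ℝ)) :
    G.IsHamiltonian ∨
      (Odd (Fintype.card V) ∧
        ((∃ X : Finset V, X.card = (Fintype.card V + 1) / 2 ∧
          (∀ x ∈ X, ∀ y ∈ X, ¬ G.Adj x y) ∧ (∀ x ∈ X, ∀ y, y ∉ X → G.Adj x y)) ∨
         (∃ (x : V) (A B : Finset V), Disjoint A B ∧ x ∉ A ∧ x ∉ B ∧
            A ∪ B = Finset.univ \ {x} ∧
            A.card = (Fintype.card V - 1) / 2 ∧ B.card = (Fintype.card V - 1) / 2 ∧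
            ∀ u v : V, G.Adj u v ↔
              u ≠ v ∧ (u = x ∨ v = x ∨ (u ∈ A ∧ v ∈ A) ∨ (u ∈ B ∧ v ∈ B))))) := by
  classical
  by_cases hham : G.IsHamiltonian
  · exact Or.inl hham
  refine Or.inr ?_
  set n := Fintype.card V with hn'
  have hn3 : 3 ≤ n := hn
  have hdeg : n ≤ 2 * G.minDegree + 1 := by
    have h1 : ((n : ℝ)) ≤ 2 * (G.minDegree : ℝ) + 1 := by
      rw [hn']; push_cast; linarith
    exact_mod_cast h1
  have hcard : n = Fintype.card V := hn'
  obtain ⟨v, hinj, hsurj, hch⟩ := HamAux.exists_ham_enum G hn hdeg hham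
  rw [← hcard] at hinj hsurj hch
  have hends : ¬ G.Adj (v (n-1)) (v 0) := fun h =>
    hham (HamAux.closure_cycle G hn hcard v hinj hsurj hch h)
  have hends' : ¬ G.Adj (v 0) (v (n-1)) := fun h => hends h.symm
  obtain ⟨hpar, hNPr, hxor⟩ := HamAux.hp_xor G hcard hn3 hdeg hham v hinj hsurj hch hends'
  set r := G.minDegree with hr'
  have hr1 : 1 ≤ r := by omega
  refine ⟨⟨r, by omega⟩, ?_⟩
  set NP := (Finset.range (n-1)).filter (fun i => G.Adj (v 0) (v (i+1))) with hNP
  have hNPmem : ∀ j, j ∈ NP ↔ j < n - 1 ∧ G.Adj (v 0) (v (j+1)) := by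
    intro j; rw [hNP, Finset.mem_filter, Finset.mem_range]
  have h0NP : 0 ∈ NP := by
    rw [hNPmem]
    exact ⟨by omega, hch 0 (by omega)⟩
  have htopNP : n - 2 ∉ NP := by
    rw [hNPmem]
    rintro ⟨-, h⟩
    rw [show n - 2 + 1 = n - 1 from by omega] at h
    exact hends' h
  -- rotation rules
  have ruleA : ∀ j ∈ NP, ∀ l, j + 2 ≤ l → l ≤ n - 1 →
      (G.Adj (v j) (v l) ↔ G.Adj (v 0) (v l)) := by
    intro j hj l h1 h2
    rw [hNPmem] at hj
    exact (HamAux.rot_rules G hcard hn3 hdeg hham v hinj hsurj hch hends'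
      (by omega) hj.2).1 l h1 h2
  have ruleB : ∀ j ∈ NP, ∀ l, l < j →
      (G.Adj (v j) (v l) ↔ G.Adj (v 0) (v (l+2))) := by
    intro j hj l h1
    rw [hNPmem] at hj
    exact (HamAux.rot_rules G hcard hn3 hdeg hham v hinj hsurj hch hends'
      (by omega) hj.2).2 l h1
  by_cases hcons : ∃ p, p ∈ NP ∧ p + 1 ∈ NP
  · by_cases hrise : ∃ q, q + 1 ∈ NP ∧ q ∉ NP
    · -- contradiction: Hamilton cycle exists
      exfalso
      obtain ⟨p, hp1, hp2⟩ := hcons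
      obtain ⟨q, hq1, hq2⟩ := hrise
      have hpn : p + 1 < n - 1 := (hNPmem _ |>.mp hp2).1
      have hpn' : p + 1 ≠ n - 2 := fun h => htopNP (h ▸ hp2)
      have hqn : q + 1 < n - 1 := (hNPmem _ |>.mp hq1).1
      have e_nq : G.Adj (v (n-1)) (v q) := by
        by_contra hcon
        exact hq2 ((hNPmem q).mpr ⟨by omega, (hxor q (by omega)).mpr hcon⟩)
      have hqp : q ≠ p := fun h => hq2 (h ▸ hp1)
      have hqp1 : q ≠ p + 1 := fun h => hq2 (h ▸ hp2)
      rcases Nat.lt_or_ge q p with hlt | hge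
      · -- q < p : pair_rise_cycle2
        have e3 : G.Adj (v (q+1)) (v (p+2)) := by
          rw [ruleA (q+1) hq1 (p+2) (by omega) (by omega)]
          have := (hNPmem _ |>.mp hp2).2
          rw [show p + 1 + 1 = p + 2 from by omega] at this
          exact this
        exact hham (HamAux.pair_rise_cycle2 G hn hcard v hinj hsurj hch
          (by omega) (by omega) e_nq (hNPmem _ |>.mp hp1).2 e3)
      · -- q > p : pair_rise_cycle1
        have hgt : p + 2 ≤ q := by omega
        have e1 : G.Adj (v p) (v (q+1)) := by
          have := (ruleB (q+1) hq1 p (by omega)).mpr ?_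
          · exact this.symm
          · have := (hNPmem _ |>.mp hp2).2
            rw [show p + 1 + 1 = p + 2 from by omega] at this
            exact this
        exact hham (HamAux.pair_rise_cycle1 G hn hcard v hinj hsurj hch
          hgt (by omega) e1 e_nq (hNPmem _ |>.mp hp1).2)
    · -- no rise: NP = range r, second exceptional graph
      push_neg at hrise
      have hRg : NP = Finset.range r := by
        apply HamAux.down_closed_range NP
        · intro x hx
          rw [Finset.mem_range]
          have := (hNPmem x).mp hx
          omega
        · exact hNPr
        · exact hrise
      have hNPlt : ∀ j, j < n - 1 → (G.Adj (v 0) (v (j+1)) ↔ j < r) := by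
        intro j hj
        have h1 : j ∈ NP ↔ G.Adj (v 0) (v (j+1)) :=
          ⟨fun h => ((hNPmem j).mp h).2, fun h => (hNPmem j).mpr ⟨hj, h⟩⟩
        rw [← h1, hRg, Finset.mem_range]
      have hLow : ∀ j, j < r → ∀ l, l < n → l ≠ j → (G.Adj (v j) (v l) ↔ l ≤ r) := by
        intro j hj l hl hlj
        have hjNP : j ∈ NP := by rw [hRg, Finset.mem_range]; exact hj
        rcases Nat.lt_or_ge l j with hlla | hlla
        · rcases Nat.eq_or_lt_of_le (show l + 1 ≤ j from hlla) with heq | hlt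
          · have hedge : G.Adj (v l) (v (l+1)) := hch l (by omega)
            rw [heq] at hedge
            exact ⟨fun _ => by omega, fun _ => hedge.symm⟩
          · rw [ruleB j hjNP l (by omega)]
            have h2 := hNPlt (l+1) (by omega)
            rw [show l + 1 + 1 = l + 2 from by omega] at h2
            rw [h2]
            omega
        · rcases Nat.eq_or_lt_of_le hlla with heq | hlt
          · omega
          · rcases Nat.eq_or_lt_of_le (show j + 1 ≤ l from hlt) with heq2 | hlt2
            · refine ⟨fun _ => by omega, fun _ => ?_⟩
              rw [← heq2]
              exact hch j (by omega)
            · rw [ruleA j hjNP l (by omega) (by omega)]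
              have h2 := hNPlt (l-1) (by omega)
              rw [show l - 1 + 1 = l from by omega] at h2
              rw [h2]
              omega
      have hTop : ∀ l, l < n - 1 → (G.Adj (v (n-1)) (v l) ↔ r ≤ l) := by
        intro l hl
        have h1 := hxor l (by omega)
        rw [hNPlt l hl] at h1
        constructor
        · intro hadj
          by_contra h
          exact (h1.mp (by omega)) hadj
        · intro hge
          by_contra hnadj
          have := h1.mpr hnadj
          omega
      have hHigh : ∀ a, r + 1 ≤ a → a ≤ 2*r → ∀ l, r ≤ l → l ≤ 2*r → l ≠ a →
          G.Adj (v a) (v l) := by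
        intro a ha1 ha2 l hl1 hl2 hla
        have hsub : G.neighborFinset (v a) ⊆ ((Finset.Icc r (2*r)).image v).erase (v a) := by
          intro x hx
          rw [SimpleGraph.mem_neighborFinset] at hx
          obtain ⟨m, hm, rfl⟩ := hsurj x
          rw [Finset.mem_erase]
          constructor
          · intro h
            rw [h] at hx
            exact G.irrefl hx
          · rw [Finset.mem_image]
            refine ⟨m, ?_, rfl⟩
            rw [Finset.mem_Icc]
            constructor
            · by_contra hmr
              have hma : m ≠ a := fun h => G.irrefl (h ▸ hx).symm
              have := (hLow m (by omega) a (by omega) (fun h => hma h.symm)).mp hx.symm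
              omega
            · omega
        have hvinj : Set.InjOn v ↑(Finset.Icc r (2*r)) := by
          intro x hx y hy hxy
          rw [Finset.mem_coe, Finset.mem_Icc] at hx hy
          exact hinj x (by omega) y (by omega) hxy
        have hcards : (((Finset.Icc r (2*r)).image v).erase (v a)).card = r := by
          rw [Finset.card_erase_of_mem, Finset.card_image_of_injOn hvinj, Nat.card_Icc]
          · omega
          · rw [Finset.mem_image]
            exact ⟨a, Finset.mem_Icc.mpr ⟨by omega, ha2⟩, rfl⟩
        have heq : G.neighborFinset (v a) = ((Finset.Icc r (2*r)).image v).erase (v a) := by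
          apply Finset.eq_of_subset_of_card_le hsub
          rw [hcards, G.card_neighborFinset_eq_degree]
          exact G.minDegree_le_degree _
        have hmemn : v l ∈ G.neighborFinset (v a) := by
          rw [heq, Finset.mem_erase]
          refine ⟨fun h => hla (hinj l (by omega) a (by omega) h), ?_⟩
          exact Finset.mem_image.mpr ⟨l, Finset.mem_Icc.mpr ⟨hl1, hl2⟩, rfl⟩
        rw [SimpleGraph.mem_neighborFinset] at hmemn
        exact hmemn
      set A : Finset V := (Finset.range r).image v with hA
      set B : Finset V := (Finset.Icc (r+1) (2*r)).image v with hB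
      have memA : ∀ m, m < n → (v m ∈ A ↔ m < r) := by
        intro m hm
        rw [hA, Finset.mem_image]
        constructor
        · rintro ⟨t, ht, hvt⟩
          rw [Finset.mem_range] at ht
          have := hinj t (by omega) m hm hvt
          omega
        · intro h
          exact ⟨m, Finset.mem_range.mpr h, rfl⟩
      have memB : ∀ m, m < n → (v m ∈ B ↔ r + 1 ≤ m) := by
        intro m hm
        rw [hB, Finset.mem_image]
        constructor
        · rintro ⟨t, ht, hvt⟩
          rw [Finset.mem_Icc] at ht
          have := hinj t (by omega) m hm hvt
          omega
        · intro h
          exact ⟨m, Finset.mem_Icc.mpr ⟨h, by omega⟩, rfl⟩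
      have hrn : r < n := by omega
      refine Or.inr ⟨v r, A, B, ?_, ?_, ?_, ?_, ?_, ?_, ?_⟩
      · rw [Finset.disjoint_left]
        intro x hx1 hx2
        rw [hA, Finset.mem_image] at hx1
        obtain ⟨t, ht, rfl⟩ := hx1
        rw [Finset.mem_range] at ht
        rw [memB t (by omega)] at hx2
        omega
      · intro h
        rw [memA r hrn] at h
        omega
      · intro h
        rw [memB r hrn] at h
        omega
      · ext x
        rw [Finset.mem_union, Finset.mem_sdiff, Finset.mem_singleton]
        obtain ⟨m, hm, rfl⟩ := hsurj x
        constructor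
        · intro h
          refine ⟨Finset.mem_univ _, ?_⟩
          intro heq
          have hmr : m = r := hinj m hm r hrn heq
          rcases h with h | h
          · rw [memA m hm] at h; omega
          · rw [memB m hm] at h; omega
        · rintro ⟨-, hne⟩
          have hmr : m ≠ r := fun h => hne (by rw [h])
          rcases Nat.lt_or_ge m r with h | h
          · exact Or.inl ((memA m hm).mpr h)
          · exact Or.inr ((memB m hm).mpr (by omega))
      · rw [hA, Finset.card_image_of_injOn, Finset.card_range]
        · omega
        · intro x hx y hy hxy
          rw [Finset.mem_coe, Finset.mem_range] at hx hy
          exact hinj x (by omega) y (by omega) hxy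
      · rw [hB, Finset.card_image_of_injOn, Nat.card_Icc]
        · omega
        · intro x hx y hy hxy
          rw [Finset.mem_coe, Finset.mem_Icc] at hx hy
          exact hinj x (by omega) y (by omega) hxy
      · intro u w
        obtain ⟨a, ha, rfl⟩ := hsurj u
        obtain ⟨b, hb, rfl⟩ := hsurj w
        have hvne : v a ≠ v b ↔ a ≠ b := by
          constructor
          · intro h1 h2; exact h1 (by rw [h2])
          · intro h1 h2; exact h1 (hinj a ha b hb h2)
        constructor
        · intro hadj
          have hne : v a ≠ v b := G.ne_of_adj hadj
          have hab : a ≠ b := hvne.mp hne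
          refine ⟨hne, ?_⟩
          by_cases har : a = r
          · exact Or.inl (by rw [har])
          by_cases hbr : b = r
          · exact Or.inr (Or.inl (by rw [hbr]))
          rcases Nat.lt_or_ge a r with h1 | h1
          · have := (hLow a h1 b hb (fun h => hab h.symm)).mp hadj
            refine Or.inr (Or.inr (Or.inl ⟨(memA a ha).mpr h1, (memA b hb).mpr (by omega)⟩))
          · rcases Nat.lt_or_ge b r with h2 | h2
            · have := (hLow b h2 a ha (fun h => hab h)).mp hadj.symm
              omega
            · refine Or.inr (Or.inr (Or.inr ⟨(memB a ha).mpr (by omega), (memB b hb).mpr (by omega)⟩))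
        · rintro ⟨hne, hcase⟩
          have hab : a ≠ b := hvne.mp hne
          rcases hcase with h | h | ⟨h1, h2⟩ | ⟨h1, h2⟩
          · have har : a = r := hinj a ha r hrn h
            rcases Nat.lt_or_ge b r with h2 | h2
            · exact ((hLow b h2 a ha (fun hh => hab hh)).mpr (by omega)).symm
            · exact (hHigh b (by omega) (by omega) a (by omega) (by omega)
                (fun hh => hab hh)).symm
          · have hbr : b = r := hinj b hb r hrn h
            rcases Nat.lt_or_ge a r with h2 | h2
            · exact (hLow a h2 b hb (fun hh => hab hh.symm)).mpr (by omega)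
            · exact hHigh a (by omega) (by omega) b (by omega) (by omega)
                (fun hh => hab hh.symm)
          · rw [memA a ha] at h1
            rw [memA b hb] at h2
            exact (hLow a h1 b hb (fun hh => hab hh.symm)).mpr (by omega)
          · rw [memB a ha] at h1
            rw [memB b hb] at h2
            exact hHigh a h1 (by omega) b (by omega) (by omega) (fun hh => hab hh.symm)

  · -- no consecutive pair: NP = evens, first exceptional graph
    push_neg at hcons
    have hEv : NP = (Finset.range r).image (fun j => 2*j) := by
      apply HamAux.no_consec_evens hr1 NP
      · intro x hx
        rw [Finset.mem_range]
        have := (hNPmem x).mp hx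
        omega
      · exact hNPr
      · exact h0NP
      · rw [show 2*r - 1 = n - 2 from by omega]
        exact htopNP
      · exact hcons
    have hNPev : ∀ j, j < n - 1 → (G.Adj (v 0) (v (j+1)) ↔ j % 2 = 0) := by
      intro j hj
      have h1 : j ∈ NP ↔ G.Adj (v 0) (v (j+1)) := by
        rw [hNPmem]
        exact ⟨fun h => h.2, fun h => ⟨hj, h⟩⟩
      rw [← h1, hEv, Finset.mem_image]
      constructor
      · rintro ⟨t, ht, rfl⟩
        omega
      · intro hmod
        refine ⟨j/2, Finset.mem_range.mpr (by omega), by omega⟩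
    have hA2 : ∀ a, a < n → a % 2 = 0 → ∀ l, l < n → l ≠ a →
        (G.Adj (v a) (v l) ↔ l % 2 = 1) := by
      intro a ha hav l hl hla
      by_cases han : a = n - 1
      · subst han
        have h1 := hxor l (by omega)
        rw [hNPev l (by omega)] at h1
        constructor
        · intro hadj
          by_contra hev
          exact (h1.mp (by omega)) hadj
        · intro hnev
          by_contra hnadj
          have := h1.mpr hnadj
          omega
      · have haNP : a ∈ NP := (hNPmem a).mpr ⟨by omega, (hNPev a (by omega)).mpr hav⟩
        rcases Nat.lt_or_ge l a with hlla | hlla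
        · rcases Nat.eq_or_lt_of_le (show l + 1 ≤ a from hlla) with heq | hlt
          · -- l = a - 1
            have : G.Adj (v l) (v (l+1)) := hch l (by omega)
            rw [heq] at this
            constructor
            · intro _; omega
            · intro _; exact this.symm
          · -- l ≤ a - 2
            rw [ruleB a haNP l (by omega)]
            have h2 := hNPev (l+1) (by omega)
            rw [show l + 1 + 1 = l + 2 from by omega] at h2
            rw [h2]
            omega
        · rcases Nat.eq_or_lt_of_le hlla with heq | hlt
          · omega
          · rcases Nat.eq_or_lt_of_le (show a + 1 ≤ l from hlt) with heq2 | hlt2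
            · -- l = a + 1
              constructor
              · intro _; omega
              · intro _
                rw [← heq2]
                exact hch a (by omega)
            · -- l ≥ a + 2
              rw [ruleA a haNP l (by omega) (by omega)]
              have h2 := hNPev (l-1) (by omega)
              rw [show l - 1 + 1 = l from by omega] at h2
              rw [h2]
              omega
    refine Or.inl ⟨(Finset.range (r+1)).image (fun j => v (2*j)), ?_, ?_, ?_⟩
    · rw [Finset.card_image_of_injOn, Finset.card_range]
      · omega
      · intro a ha b hb hab
        rw [Finset.mem_coe, Finset.mem_range] at ha hb
        have := hinj (2*a) (by omega) (2*b) (by omega) hab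
        omega
    · intro x hx y hy
      rw [Finset.mem_image] at hx hy
      obtain ⟨a, ha, rfl⟩ := hx
      obtain ⟨b, hb, rfl⟩ := hy
      rw [Finset.mem_range] at ha hb
      intro hadj
      have hab : a ≠ b := by
        intro h; subst h; exact G.irrefl hadj
      have := (hA2 (2*a) (by omega) (by omega) (2*b) (by omega) (by omega)).mp hadj
      omega
    · intro x hx y hyX
      rw [Finset.mem_image] at hx
      obtain ⟨a, ha, rfl⟩ := hx
      rw [Finset.mem_range] at ha
      obtain ⟨m, hm, rfl⟩ := hsurj y
      have hmodd : m % 2 = 1 := by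
        by_contra hev
        apply hyX
        rw [Finset.mem_image]
        exact ⟨m/2, Finset.mem_range.mpr (by omega), by congr 1; omega⟩
      have hne : m ≠ 2*a := by omega
      exact ((hA2 (2*a) (by omega) (by omega) m (by omega) hne).mpr hmodd).symm.symm
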